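/- (Coefficient form of the quantum MacWilliams identity) With notation as in the MacWilliams identity for symplectic orthogonal groups, B_w = (1/|V^⊥|) Σ_{w'=0}^n P_w(w',n) A_{w'} for each w, where P_w(w',n) = Σ_{u=0}^{w} (−1)^u 3^{w−u} C(w',u) C(n−w', w−u) is the quaternary Krawtchouk polynomial. -/

import Mathlib

/-- Pauli vector space: pairs (u,v) of binary n-tuples labeling `X^u Z^v`. -/
abbrev PV (n : ℕ) := (Fin n → ZMod 2) × (Fin n → ZMod 2)

/-- The symplectic inner product `(u₁,v₁)*(u₂,v₂) = u₁·v₂ + u₂·v₁ (mod 2)`. -/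
def sympl {n : ℕ} (a b : PV n) : ZMod 2 :=
  (∑ i, a.1 i * b.2 i) + (∑ i, a.2 i * b.1 i)

lemma sympl_add_left {n : ℕ} (a b c : PV n) :
    sympl (a + b) c = sympl a c + sympl b c := by
  simp only [sympl, Prod.fst_add, Prod.snd_add, Pi.add_apply, add_mul]
  rw [Finset.sum_add_distrib, Finset.sum_add_distrib]
  ring

lemma sympl_smul_left {n : ℕ} (r : ZMod 2) (a c : PV n) :
    sympl (r • a) c = r * sympl a c := by
  simp only [sympl, Prod.smul_fst, Prod.smul_snd, Pi.smul_apply, smul_eq_mul, mul_assoc]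
  rw [← Finset.mul_sum, ← Finset.mul_sum, ← mul_add]

/-- Symplectic orthogonal complement of a subspace of `PV n`. -/
def sOrth {n : ℕ} (V : Submodule (ZMod 2) (PV n)) : Submodule (ZMod 2) (PV n) where
  carrier := {g | ∀ h ∈ V, sympl g h = 0}
  zero_mem' := by
    intro h _
    have : (0 : PV n) = (0 : ZMod 2) • (0 : PV n) := by simp
    rw [this, sympl_smul_left, zero_mul]
  add_mem' := by
    intro a b ha hb x hx
    rw [sympl_add_left, ha x hx, hb x hx, add_zero]
  smul_mem' := by
    intro r a ha x hx
    rw [sympl_smul_left, ha x hx, mul_zero]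

/-- Pauli weight of `(u,v)`: number of positions where `(uᵢ,vᵢ) ≠ (0,0)`. -/
def wt {n : ℕ} (a : PV n) : ℕ :=
  (Finset.univ.filter fun i => a.1 i ≠ 0 ∨ a.2 i ≠ 0).card

/-- The quaternary Krawtchouk polynomial
`P_w(w',n) = Σ_{u=0}^{w} (−1)^u 3^{w−u} C(w',u) C(n−w',w−u)`. -/
def kraw (w w' n : ℕ) : ℤ :=
  ∑ u ∈ Finset.range (w + 1),
    (-1 : ℤ) ^ u * 3 ^ (w - u) * (w'.choose u) * ((n - w').choose (w - u))

set_option linter.all false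
open scoped Classical

/- ### auxiliary development -/

lemma mem_sOrth {n : ℕ} {V : Submodule (ZMod 2) (PV n)} {g : PV n} :
    g ∈ sOrth V ↔ ∀ h ∈ V, sympl g h = 0 := Iff.rfl

lemma sympl_comm {n : ℕ} (a b : PV n) : sympl a b = sympl b a := by
  unfold sympl
  rw [add_comm]
  congr 1 <;> exact Finset.sum_congr rfl fun i _ => mul_comm _ _

lemma sympl_add_right {n : ℕ} (a b c : PV n) :
    sympl a (b + c) = sympl a b + sympl a c := by
  rw [sympl_comm, sympl_add_left, sympl_comm b, sympl_comm c]

noncomputable def chi {n : ℕ} (g h : PV n) : ℤ := (-1) ^ (sympl g h).val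

lemma chi_eq_one {n : ℕ} {g h : PV n} (h0 : sympl g h = 0) : chi g h = 1 := by
  simp [chi, h0]

lemma chi_eq_neg_one {n : ℕ} {g h : PV n} (h0 : sympl g h ≠ 0) : chi g h = -1 := by
  have h1 : sympl g h = 1 := by
    revert h0
    generalize sympl g h = x
    revert x
    decide
  rw [chi, h1]
  rfl

lemma neg_one_pow_val_add : ∀ x y : ZMod 2,
    (-1 : ℤ) ^ ((x + y).val) = (-1 : ℤ) ^ x.val * (-1 : ℤ) ^ y.val := by decide

lemma chi_add_right {n : ℕ} (g h h' : PV n) :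
    chi g (h + h') = chi g h * chi g h' := by
  unfold chi
  rw [sympl_add_right, neg_one_pow_val_add]

lemma chi_add_left {n : ℕ} (g g' h : PV n) :
    chi (g + g') h = chi g h * chi g' h := by
  unfold chi
  rw [sympl_add_left, neg_one_pow_val_add]

lemma self_add_self {n : ℕ} (a : PV n) : a + a = 0 := by
  have h2 : (2 : ZMod 2) = 0 := by decide
  rw [← two_smul (ZMod 2) a, h2, zero_smul]

lemma neg_one_pow_val_sum {ι : Type*} (s : Finset ι) (f : ι → ZMod 2) :
    (-1 : ℤ) ^ ((∑ i ∈ s, f i).val) = ∏ i ∈ s, (-1 : ℤ) ^ (f i).val := by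
  classical
  induction s using Finset.cons_induction with
  | empty => simp
  | cons a s ha ih => rw [Finset.sum_cons, Finset.prod_cons, ← ih, neg_one_pow_val_add]

/- ### character sums over subgroups -/

open Finset

lemma sum_chi_subgroup {n : ℕ} (W : Submodule (ZMod 2) (PV n)) (g : PV n) :
    ∑ h ∈ univ.filter (· ∈ W), chi g h =
      if g ∈ sOrth W then ((univ.filter (· ∈ W)).card : ℤ) else 0 := by
  classical
  split
  · rename_i hg
    rw [Finset.sum_congr rfl fun h hh => chi_eq_one (hg h (by simpa using hh))]
    simp
  · rename_i hg
    obtain ⟨h₀, hh₀W, hh₀⟩ : ∃ h₀ ∈ W, sympl g h₀ ≠ 0 := by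
      by_contra hc
      push_neg at hc
      exact hg hc
    have key : ∑ h ∈ univ.filter (· ∈ W), chi g (h + h₀)
        = ∑ h ∈ univ.filter (· ∈ W), chi g h := by
      refine Finset.sum_equiv (Equiv.addRight h₀) (fun h => ?_) (fun h _ => rfl)
      simp only [mem_filter, mem_univ, true_and, Equiv.coe_addRight]
      constructor
      · intro hh
        exact W.add_mem hh hh₀W
      · intro hh
        have := W.add_mem hh hh₀W
        rwa [add_assoc, self_add_self, add_zero] at this
    have flip : ∑ h ∈ univ.filter (· ∈ W), chi g (h + h₀)
        = -∑ h ∈ univ.filter (· ∈ W), chi g h := by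
      rw [← Finset.sum_neg_distrib]
      refine Finset.sum_congr rfl fun h _ => ?_
      rw [chi_add_right, chi_eq_neg_one hh₀, mul_neg_one]
    linarith [key.symm.trans flip]

lemma exists_nonorth {n : ℕ} {h : PV n} (hh : h ≠ 0) : ∃ g : PV n, sympl g h ≠ 0 := by
  obtain ⟨i, hi⟩ : ∃ i, h.1 i ≠ 0 ∨ h.2 i ≠ 0 := by
    by_contra hc
    push_neg at hc
    apply hh
    ext i
    · exact (hc i).1
    · exact (hc i).2
  rcases hi with hi | hi
  · refine ⟨(0, Pi.single i 1), ?_⟩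
    have : sympl (0, Pi.single i 1) h = h.1 i := by
      simp [sympl, Pi.single_apply, Finset.sum_ite_eq']
    rw [this]; exact hi
  · refine ⟨(Pi.single i 1, 0), ?_⟩
    have : sympl (Pi.single i 1, 0) h = h.2 i := by
      simp [sympl, Pi.single_apply, Finset.sum_ite_eq']
    rw [this]; exact hi

lemma sum_chi_univ {n : ℕ} (h : PV n) :
    ∑ g : PV n, chi g h = if h = 0 then (Fintype.card (PV n) : ℤ) else 0 := by
  classical
  split
  · rename_i h0
    subst h0
    rw [Finset.sum_congr rfl fun g _ => chi_eq_one (by simp [sympl])]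
    simp
  · rename_i h0
    obtain ⟨g₀, hg₀⟩ := exists_nonorth h0
    have key : ∑ g : PV n, chi g h = ∑ g : PV n, chi (g + g₀) h :=
      (Fintype.sum_equiv (Equiv.addRight g₀) _ _ (fun g => rfl)).symm
    have : ∑ g : PV n, chi (g + g₀) h = -∑ g : PV n, chi g h := by
      rw [← Finset.sum_neg_distrib]
      refine Finset.sum_congr rfl fun g _ => ?_
      rw [chi_add_left, chi_eq_neg_one hg₀, mul_neg_one]
    linarith [key.trans this]

lemma card_mul_card {n : ℕ} (W : Submodule (ZMod 2) (PV n)) :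
    ((univ.filter (· ∈ W)).card : ℤ) * ((univ.filter (· ∈ sOrth W)).card : ℤ)
      = (Fintype.card (PV n) : ℤ) := by
  classical
  have lhs : ∑ g : PV n, ∑ h ∈ univ.filter (· ∈ W), chi g h
      = ((univ.filter (· ∈ W)).card : ℤ) * ((univ.filter (· ∈ sOrth W)).card : ℤ) := by
    rw [Finset.sum_congr rfl fun g _ => sum_chi_subgroup W g, ← Finset.sum_filter,
      Finset.sum_const, nsmul_eq_mul, mul_comm]
  have rhs : ∑ g : PV n, ∑ h ∈ univ.filter (· ∈ W), chi g h
      = (Fintype.card (PV n) : ℤ) := by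
    rw [Finset.sum_comm, Finset.sum_congr rfl fun h _ => sum_chi_univ h,
      Finset.sum_ite_eq' (univ.filter (· ∈ W)) (0 : PV n)]
    simp [W.zero_mem]
  rw [← lhs, rhs]

lemma sOrth_sOrth {n : ℕ} (V : Submodule (ZMod 2) (PV n)) : sOrth (sOrth V) = V := by
  classical
  have hsub : (univ.filter (· ∈ V)) ⊆ (univ.filter (· ∈ sOrth (sOrth V))) := by
    intro g hg
    simp only [mem_filter, mem_univ, true_and] at hg ⊢
    intro h hh
    rw [sympl_comm]
    exact hh g hg
  have h1 := card_mul_card V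
  have h2 := card_mul_card (sOrth V)
  have hpos : ((univ.filter (· ∈ sOrth V)).card : ℤ) ≠ 0 := by
    have hmem : (0 : PV n) ∈ univ.filter (· ∈ sOrth V) := by
      simp [(sOrth V).zero_mem]
    have hc := Finset.card_pos.mpr ⟨0, hmem⟩
    exact_mod_cast hc.ne'
  have hcards : ((univ.filter (· ∈ sOrth (sOrth V))).card : ℤ)
      = ((univ.filter (· ∈ V)).card : ℤ) := by
    refine mul_right_cancel₀ hpos ?_
    rw [mul_comm ((univ.filter (· ∈ V)).card : ℤ) _] at h1
    linarith
  have hfin : (univ.filter (· ∈ V)) = (univ.filter (· ∈ sOrth (sOrth V))) :=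
    Finset.eq_of_subset_of_card_le hsub (by exact_mod_cast hcards.le)
  ext g
  have : g ∈ univ.filter (· ∈ V) ↔ g ∈ univ.filter (· ∈ sOrth (sOrth V)) := by rw [hfin]
  simpa using this.symm

/- ### the generating function computation -/

open Polynomial in
lemma coeff_one_add_C_mul_X_pow (a : ℤ) (m k : ℕ) :
    ((1 + C a * X)^m).coeff k = a ^ k * m.choose k := by
  rw [add_comm, add_pow]
  rw [finset_sum_coeff]
  have : ∀ i ∈ Finset.range (m+1), (((C a * X)^i * 1^(m-i) * (m.choose i : ℤ[X])).coeff k)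
      = if i = k then a ^ i * m.choose i else 0 := by
    intro i _
    rw [one_pow, mul_one, mul_pow, ← C_pow, ← C_eq_natCast, mul_assoc, coeff_C_mul,
      coeff_mul_C, coeff_X_pow]
    split <;> simp_all [eq_comm]
  rw [Finset.sum_congr rfl this, Finset.sum_ite_eq' (Finset.range (m+1)) k]
  split
  · rfl
  · rename_i hk
    have hk2 : ¬ k < m + 1 := fun h => hk (Finset.mem_range.mpr h)
    rw [Nat.choose_eq_zero_of_lt (by omega : m < k), Nat.cast_zero, mul_zero]

open Polynomial in
lemma coeff_eq_kraw (w w' n : ℕ) :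
    (((1 + C (-1:ℤ) * X) ^ w') * ((1 + C (3:ℤ) * X) ^ (n - w'))).coeff w = kraw w w' n := by
  rw [Polynomial.coeff_mul, Finset.Nat.sum_antidiagonal_eq_sum_range_succ_mk]
  unfold kraw
  refine Finset.sum_congr rfl fun u _ => ?_
  rw [coeff_one_add_C_mul_X_pow, coeff_one_add_C_mul_X_pow]
  ring

open Polynomial in
lemma point_sum (b1 b2 : ZMod 2) :
    ∑ a : ZMod 2 × ZMod 2, (C ((-1:ℤ)^((a.1 * b2 + a.2 * b1).val)) *
      (if a.1 ≠ 0 ∨ a.2 ≠ 0 then X else 1)) =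
    if b1 ≠ 0 ∨ b2 ≠ 0 then 1 + C (-1:ℤ) * X else 1 + C (3:ℤ) * X := by
  have huniv : (Finset.univ : Finset (ZMod 2 × ZMod 2)) = {(0,0),(0,1),(1,0),(1,1)} := by decide
  rw [huniv]
  repeat rw [Finset.sum_insert (by decide)]
  rw [Finset.sum_singleton]
  obtain rfl | rfl : b1 = 0 ∨ b1 = 1 := by revert b1; decide
  all_goals obtain rfl | rfl : b2 = 0 ∨ b2 = 1 := by revert b2; decide
  all_goals
    norm_num [ZMod.val_one, show ((1:ZMod 2)+1) = 0 from rfl] <;>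
    ring_nf <;> simp [Polynomial.C_neg, show (2:ZMod 2) = 0 from rfl] <;> try ring

open Polynomial in
lemma gen_identity {n : ℕ} (h : PV n) :
    ∑ g : PV n, (C (chi g h) * X ^ (wt g)) =
      (1 + C (-1:ℤ) * X) ^ (wt h) * (1 + C (3:ℤ) * X) ^ (n - wt h) := by
  have hfact : ∀ g : PV n, C (chi g h) * X ^ (wt g) =
      ∏ i, (C ((-1:ℤ)^((g.1 i * h.2 i + g.2 i * h.1 i).val)) *
        (if g.1 i ≠ 0 ∨ g.2 i ≠ 0 then X else 1)) := by
    intro g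
    rw [Finset.prod_mul_distrib]
    congr 1
    · rw [← map_prod]
      congr 1
      unfold chi sympl
      rw [← Finset.sum_add_distrib]
      exact neg_one_pow_val_sum _ _
    · rw [wt, Finset.card_filter, ← Finset.prod_pow_eq_pow_sum]
      refine Finset.prod_congr rfl fun i _ => ?_
      split <;> simp
  rw [Finset.sum_congr rfl fun g _ => hfact g]
  rw [← Fintype.sum_equiv (Equiv.arrowProdEquivProdArrow (Fin n) (fun _ => ZMod 2) (fun _ => ZMod 2))
      (fun p => ∏ i, (C ((-1:ℤ)^(((p i).1 * h.2 i + (p i).2 * h.1 i).val)) *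
        (if (p i).1 ≠ 0 ∨ (p i).2 ≠ 0 then X else 1)))
      (fun g => ∏ i, (C ((-1:ℤ)^((g.1 i * h.2 i + g.2 i * h.1 i).val)) *
        (if g.1 i ≠ 0 ∨ g.2 i ≠ 0 then X else 1)))
      (fun p => rfl)]
  have hps := Finset.prod_univ_sum (fun _ : Fin n => (Finset.univ : Finset (ZMod 2 × ZMod 2)))
      (fun i a => C ((-1:ℤ)^((a.1 * h.2 i + a.2 * h.1 i).val)) *
        (if a.1 ≠ 0 ∨ a.2 ≠ 0 then X else 1))
  rw [Fintype.piFinset_univ] at hps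
  rw [← hps]
  have hpt : ∀ i : Fin n, ∑ a : ZMod 2 × ZMod 2,
      (C ((-1:ℤ)^((a.1 * h.2 i + a.2 * h.1 i).val)) * (if a.1 ≠ 0 ∨ a.2 ≠ 0 then X else 1)) =
      if h.1 i ≠ 0 ∨ h.2 i ≠ 0 then 1 + C (-1:ℤ) * X else 1 + C (3:ℤ) * X := by
    intro i; exact point_sum (h.1 i) (h.2 i)
  rw [Finset.prod_congr rfl fun i _ => hpt i,
    Finset.prod_ite (fun _ => 1 + C (-1:ℤ) * X) (fun _ => 1 + C (3:ℤ) * X),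
    Finset.prod_const, Finset.prod_const]
  have hcard := Finset.card_filter_add_card_filter_not
      (s := (Finset.univ : Finset (Fin n))) (p := fun i => h.1 i ≠ 0 ∨ h.2 i ≠ 0)
  have hwt : (Finset.univ.filter fun i => h.1 i ≠ 0 ∨ h.2 i ≠ 0).card = wt h := rfl
  have hn : (Finset.univ : Finset (Fin n)).card = n := by simp
  have : (Finset.univ.filter fun i => ¬(h.1 i ≠ 0 ∨ h.2 i ≠ 0)).card = n - wt h := by omega
  rw [hwt, this]

lemma key_sum {n : ℕ} (w : ℕ) (h : PV n) :
    ∑ g ∈ univ.filter (fun g : PV n => wt g = w), chi g h = kraw w (wt h) n := by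
  have hco := congrArg (fun Q : Polynomial ℤ => Q.coeff w) (gen_identity h)
  rw [Polynomial.finset_sum_coeff, coeff_eq_kraw] at hco
  rw [← hco, Finset.sum_filter]
  refine Finset.sum_congr rfl fun g _ => ?_
  rw [Polynomial.coeff_C_mul, Polynomial.coeff_X_pow]
  by_cases hgw : wt g = w
  · simp [hgw]
  · rw [if_neg hgw, if_neg (fun hc : w = wt g => hgw hc.symm), mul_zero]

lemma wt_le {n : ℕ} (h : PV n) : wt h ≤ n := by
  have := Finset.card_filter_le (Finset.univ : Finset (Fin n))
    (fun i => h.1 i ≠ 0 ∨ h.2 i ≠ 0)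
  simpa [wt] using this

lemma natCard_eq {n : ℕ} (p : PV n → Prop) :
    Nat.card {g : PV n // p g} = (univ.filter p).card := by
  simp [Nat.card_eq_fintype_card, Fintype.card_subtype]

/-- coefficient form of the quantum MacWilliams identity:
`B_w = |V^⊥|⁻¹ Σ_{w'=0}^n P_w(w',n) A_{w'}`. -/
theorem macwilliams_coefficients {n : ℕ} (V : Submodule (ZMod 2) (PV n))
    (B A : ℕ → ℕ)
    (hB : ∀ w, B w = Nat.card {g : PV n // g ∈ V ∧ wt g = w})
    (hA : ∀ w', A w' = Nat.card {g : PV n // g ∈ sOrth V ∧ wt g = w'}) :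
    ∀ w, w ≤ n →
      (B w : ℝ) = (1 / (Nat.card (sOrth V) : ℝ)) *
        ∑ w' ∈ Finset.range (n + 1), (kraw w w' n : ℝ) * (A w' : ℝ) := by
  intro w hw
  have hA' : ∀ w', (A w' : ℤ)
      = ((univ.filter fun h : PV n => h ∈ sOrth V ∧ wt h = w').card : ℤ) := by
    intro w'; rw [hA w', natCard_eq]; exact_mod_cast congrArg Finset.card (Finset.filter_congr_decidable _ _ _)
  have hB' : (B w : ℤ) = ((univ.filter fun g : PV n => g ∈ V ∧ wt g = w).card : ℤ) := by
    rw [hB w, natCard_eq]; exact_mod_cast congrArg Finset.card (Finset.filter_congr_decidable _ _ _)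
  set P : Finset (PV n) := univ.filter (· ∈ sOrth V) with hP
  have step1 : ∀ w', kraw w w' n * (A w' : ℤ)
      = ∑ h ∈ P.filter (fun h => wt h = w'), kraw w (wt h) n := by
    intro w'
    rw [Finset.sum_congr rfl (fun h hh => by rw [(Finset.mem_filter.mp hh).2]),
      Finset.sum_const, nsmul_eq_mul]
    rw [hA' w', hP, Finset.filter_filter]
    ring
  have step2 : ∑ w' ∈ Finset.range (n+1), kraw w w' n * (A w' : ℤ)
      = ∑ h ∈ P, kraw w (wt h) n := by
    rw [Finset.sum_congr rfl fun w' _ => step1 w']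
    exact Finset.sum_fiberwise_of_maps_to
      (fun h _ => Finset.mem_range.mpr (Nat.lt_succ_of_le (wt_le h))) _
  have step3 : ∑ h ∈ P, kraw w (wt h) n
      = ∑ g ∈ univ.filter (fun g : PV n => wt g = w), ∑ h ∈ P, chi g h := by
    rw [Finset.sum_comm]
    exact Finset.sum_congr rfl fun h _ => (key_sum w h).symm
  have step4 : ∑ g ∈ univ.filter (fun g : PV n => wt g = w), ∑ h ∈ P, chi g h
      = (P.card : ℤ) * (B w : ℤ) := by
    rw [Finset.sum_congr rfl fun g _ => sum_chi_subgroup (sOrth V) g]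
    simp only [sOrth_sOrth]
    rw [← Finset.sum_filter, Finset.sum_const, nsmul_eq_mul, Finset.filter_filter]
    have hfe : (univ.filter fun g : PV n => wt g = w ∧ g ∈ V)
        = (univ.filter fun g : PV n => g ∈ V ∧ wt g = w) := by
      apply Finset.filter_congr
      intro g _
      exact ⟨fun ⟨a, b⟩ => ⟨b, a⟩, fun ⟨a, b⟩ => ⟨b, a⟩⟩
    rw [hfe, ← hB']
    ring
  have hchain : (P.card : ℤ) * (B w : ℤ)
      = ∑ w' ∈ Finset.range (n+1), kraw w w' n * (A w' : ℤ) :=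
    ((step2.trans step3).trans step4).symm
  have hcardP : ((Nat.card (sOrth V) : ℕ) : ℝ) = (P.card : ℝ) := by
    have : Nat.card (sOrth V) = P.card := natCard_eq (fun g => g ∈ sOrth V)
    exact_mod_cast congrArg (Nat.cast : ℕ → ℝ) this
  have hne : (P.card : ℝ) ≠ 0 := by
    have h0P : (0 : PV n) ∈ P := by simp [hP, (sOrth V).zero_mem]
    exact Nat.cast_ne_zero.mpr (Finset.card_pos.mpr ⟨0, h0P⟩).ne'
  rw [hcardP]
  have hR := congrArg (fun z : ℤ => (z : ℝ)) hchain
  push_cast at hR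
  field_simp
  linarith [hR]
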